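/- Let X be a Banach space, (yᵢ) a normalized basic sequence with constant 2 and Y = [y]. If S : Y → X is strictly singular, then for every ε > 0 there exists a normalized block basic sequence (y'ᵢ) of (yᵢ) such that ‖S u‖ ≤ ε‖u‖ for all u in the closed span of (y'ᵢ). -/

import Mathlib

open Filter Topology

noncomputable section

variable {E F : Type*}

def IsInfDimClosed [NormedAddCommGroup E] [NormedSpace ℂ E] (M : Submodule ℂ E) : Prop :=
  IsClosed (M : Set E) ∧ ¬ FiniteDimensional ℂ M

def HI (E : Type*) [NormedAddCommGroup E] [NormedSpace ℂ E] : Prop :=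
  ∀ M N : Submodule ℂ E, IsInfDimClosed M → IsInfDimClosed N → ∀ ε > 0,
    ∃ u ∈ M, ∃ v ∈ N, ‖u‖ = 1 ∧ ‖v‖ = 1 ∧ ‖u - v‖ ≤ ε

def StrictlySingular [NormedAddCommGroup E] [NormedSpace ℂ E]
    [NormedAddCommGroup F] [NormedSpace ℂ F] (S : E →L[ℂ] F) : Prop :=
  ∀ M : Submodule ℂ E, IsInfDimClosed M → ∀ c > 0, ∃ x ∈ M, ‖S x‖ < c * ‖x‖

def IsNBasic2 [NormedAddCommGroup E] [NormedSpace ℂ E] (y : ℕ → E) : Prop :=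
  (∀ i, ‖y i‖ = 1) ∧ ∀ (a : ℕ → ℂ) (m n : ℕ), m ≤ n →
    ‖∑ i ∈ Finset.range m, a i • y i‖ ≤ 2 * ‖∑ i ∈ Finset.range n, a i • y i‖

def IsBlockOf [NormedAddCommGroup E] [NormedSpace ℂ E] (w z : ℕ → E) : Prop :=
  ∃ (a : ℕ → ℂ) (F : ℕ → Finset ℕ), (∀ k, (F k).Nonempty) ∧
    (∀ k i j, i ∈ F k → j ∈ F (k+1) → i < j) ∧
    (∀ k, w k = ∑ i ∈ F k, a i • z i) ∧ (∀ k, w k ≠ 0)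

def IsNBlockOf [NormedAddCommGroup E] [NormedSpace ℂ E] (w z : ℕ → E) : Prop :=
  IsBlockOf w z ∧ ∀ k, ‖w k‖ = 1

def cSpan [NormedAddCommGroup E] [NormedSpace ℂ E] (y : ℕ → E) : Submodule ℂ E :=
  (Submodule.span ℂ (Set.range y)).topologicalClosure

def tailSpan [NormedAddCommGroup E] [NormedSpace ℂ E] (y : ℕ → E) (k : ℕ) : Submodule ℂ E :=
  cSpan (fun i => y (i + k))

theorem mem_cSpan [NormedAddCommGroup E] [NormedSpace ℂ E] (y : ℕ → E) (i : ℕ) :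
    y i ∈ cSpan y :=
  (Submodule.span ℂ (Set.range y)).le_topologicalClosure (Submodule.subset_span ⟨i, rfl⟩)

theorem tailSpan_le [NormedAddCommGroup E] [NormedSpace ℂ E] (y : ℕ → E) (k : ℕ) :
    tailSpan y k ≤ cSpan y :=
  Submodule.topologicalClosure_mono (Submodule.span_mono (by rintro _ ⟨i, rfl⟩; exact ⟨i + k, rfl⟩))

def inclCLM [NormedAddCommGroup E] [NormedSpace ℂ E] {M N : Submodule ℂ E} (h : M ≤ N) :
    M →L[ℂ] N :=
  LinearMap.mkContinuous (Submodule.inclusion h) 1 (by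
    intro x
    simp [Submodule.inclusion])

-- Part A
theorem partial_vanish [NormedAddCommGroup E] [NormedSpace ℂ E] {y : ℕ → E}
    (hy : IsNBasic2 y) (a : ℕ → ℂ) (n : ℕ)
    (h : ∑ i ∈ Finset.range n, a i • y i = 0) : ∀ i < n, a i = 0 := by
  have hP : ∀ m ≤ n, ∑ i ∈ Finset.range m, a i • y i = 0 := by
    intro m hm
    have := hy.2 a m n hm
    rw [h, norm_zero, mul_zero] at this
    exact norm_le_zero_iff.mp this
  intro i hi
  have h1 : ∑ j ∈ Finset.range (i+1), a j • y j = 0 := hP _ hi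
  have h2 : ∑ j ∈ Finset.range i, a j • y j = 0 := hP _ hi.le
  rw [Finset.sum_range_succ, h2, zero_add] at h1
  have := congrArg norm h1
  rw [norm_smul, hy.1 i, mul_one, norm_zero] at this
  exact norm_eq_zero.mp this

theorem nbasic_linearIndependent [NormedAddCommGroup E] [NormedSpace ℂ E] {y : ℕ → E}
    (hy : IsNBasic2 y) : LinearIndependent ℂ y := by
  rw [linearIndependent_iff']
  intro s g hsum i hi
  classical
  set n := (s.sup id) + 1 with hn
  have hsub : s ⊆ Finset.range n := by
    intro j hj
    exact Finset.mem_range.mpr (Nat.lt_succ_of_le (Finset.le_sup (f := id) hj))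
  set a : ℕ → ℂ := fun j => if j ∈ s then g j else 0 with ha
  have hEq : ∑ j ∈ Finset.range n, a j • y j = ∑ j ∈ s, g j • y j := by
    rw [← Finset.sum_subset hsub (fun j _ hj => by simp [ha, hj])]
    exact Finset.sum_congr rfl (fun j hj => by simp [ha, hj])
  have := partial_vanish hy a n (hEq.trans hsum) i (Finset.mem_range.mp (hsub hi))
  simpa [ha, hi] using this

-- Part B
theorem tail_infdim [NormedAddCommGroup E] [NormedSpace ℂ E] {y : ℕ → E}
    (hy : IsNBasic2 y) (k : ℕ) : IsInfDimClosed (tailSpan y k) := by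
  refine ⟨Submodule.isClosed_topologicalClosure _, ?_⟩
  intro hfd
  set f : ℕ → tailSpan y k := fun j => ⟨y (j + k), mem_cSpan (fun i => y (i + k)) j⟩ with hf
  have hind : LinearIndependent ℂ f := by
    apply LinearIndependent.of_comp (tailSpan y k).subtype
    have : ((tailSpan y k).subtype ∘ f) = (y ∘ fun j => j + k) := rfl
    rw [this]
    exact (nbasic_linearIndependent hy).comp _ (add_left_injective k)
  have : Finite ℕ := hind.finite_of_isNoetherian
  exact (instInfiniteNat).not_finite this


-- Part B'
theorem tail_infdim' {X : Type*} [NormedAddCommGroup X] [NormedSpace ℂ X]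
    {y : ℕ → X} (hy : IsNBasic2 y) (k : ℕ) :
    IsInfDimClosed ((tailSpan y k).comap (cSpan y).subtype) := by
  constructor
  · exact (tail_infdim hy k).1.preimage continuous_subtype_val
  · intro hfd
    set M := (tailSpan y k).comap (cSpan y).subtype with hM
    have hmem : ∀ j : ℕ, y (j + k) ∈ cSpan y := fun j => mem_cSpan y (j + k)
    set f : ℕ → M := fun j => ⟨⟨y (j + k), hmem j⟩, mem_cSpan (fun i => y (i + k)) j⟩ with hf
    have hind : LinearIndependent ℂ f := by
      apply LinearIndependent.of_comp ((cSpan y).subtype ∘ₗ M.subtype)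
      have : (((cSpan y).subtype ∘ₗ M.subtype) ∘ f) = (y ∘ fun j => j + k) := rfl
      rw [this]
      exact (nbasic_linearIndependent hy).comp _ (add_left_injective k)
    exact (instInfiniteNat).not_finite hind.finite_of_isNoetherian

-- Part C : key single-block lemma
theorem key_block {X : Type*} [NormedAddCommGroup X] [NormedSpace ℂ X] [CompleteSpace X]
    {y : ℕ → X} (hy : IsNBasic2 y) (S : cSpan y →L[ℂ] X) (hS : StrictlySingular S)
    (k : ℕ) {δ : ℝ} (hδ : 0 < δ) :
    ∃ (n : ℕ) (a : ℕ → ℂ) (w : cSpan y), k ≤ n ∧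
      (w : X) = ∑ j ∈ Finset.Ico k (n+1), a j • y j ∧ ‖(w : X)‖ = 1 ∧ ‖S w‖ ≤ δ := by
  classical
  obtain ⟨x, hxM, hxS⟩ := hS ((tailSpan y k).comap (cSpan y).subtype) (tail_infdim' hy k)
    (δ/4) (by positivity)
  have hx0 : x ≠ 0 := by
    rintro rfl
    simp only [map_zero, norm_zero, mul_zero] at hxS
    exact lt_irrefl 0 hxS
  have hxn : (0:ℝ) < ‖x‖ := norm_pos_iff.mpr hx0
  set x' : cSpan y := ((‖x‖ : ℂ))⁻¹ • x with hx'
  have hx'M : (x' : X) ∈ tailSpan y k := by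
    have : (x : X) ∈ tailSpan y k := hxM
    simpa [hx'] using Submodule.smul_mem _ ((‖x‖ : ℂ))⁻¹ this
  have hnormx : ‖((‖x‖:ℂ))⁻¹‖ = ‖x‖⁻¹ := by
    rw [norm_inv, Complex.norm_real, Real.norm_eq_abs, abs_of_pos hxn]
  have hx'n : ‖x'‖ = 1 := by
    rw [hx', norm_smul, hnormx, inv_mul_cancel₀ hxn.ne']
  have hx'S : ‖S x'‖ < δ/4 := by
    rw [hx', map_smul, norm_smul, hnormx]
    calc ‖x‖⁻¹ * ‖S x‖ < ‖x‖⁻¹ * (δ/4 * ‖x‖) := by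
          exact mul_lt_mul_of_pos_left hxS (inv_pos.mpr hxn)
      _ = δ/4 * (‖x‖⁻¹ * ‖x‖) := by ring
      _ = δ/4 := by rw [inv_mul_cancel₀ hxn.ne', mul_one]
  -- step 2: approximate x' by a finite combination v (in X)
  set r : ℝ := min (1/2) (δ/(8*(‖S‖+1))) with hr
  have hSpos : (0:ℝ) < ‖S‖ + 1 := by positivity
  have hrpos : 0 < r := lt_min (by norm_num) (by positivity)
  have hx'cl : (x' : X) ∈ closure ((Submodule.span ℂ (Set.range fun i => y (i + k)) : Submodule ℂ X) : Set X) := by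
    have h1 := hx'M
    rw [tailSpan, cSpan] at h1
    rwa [← Submodule.topologicalClosure_coe]
  obtain ⟨v, hvmem, hvdist⟩ := Metric.mem_closure_iff.mp hx'cl r hrpos
  rw [dist_eq_norm] at hvdist
  obtain ⟨c, hc⟩ := Finsupp.mem_span_range_iff_exists_finsupp.mp hvmem
  -- rewrite v as a sum over Ico k (n+1)
  set n : ℕ := c.support.sup id + k with hn
  set a : ℕ → ℂ := fun j => if k ≤ j then c (j - k) else 0 with ha
  have h1 : v = ∑ i ∈ Finset.range (c.support.sup id + 1), c i • y (i + k) := by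
    rw [← hc, Finsupp.sum]
    apply Finset.sum_subset
    · intro i hi
      exact Finset.mem_range.mpr (Nat.lt_succ_of_le (Finset.le_sup (f := id) hi))
    · intro i _ hi
      rw [Finsupp.notMem_support_iff.mp hi, zero_smul]
  have hvsum : v = ∑ j ∈ Finset.Ico k (n+1), a j • y j := by
    rw [h1]
    refine Finset.sum_nbij' (fun i => i + k) (fun j => j - k) ?_ ?_ ?_ ?_ ?_
    · intro i hi
      simp only [Finset.mem_range] at hi
      simp only [Finset.mem_Ico, hn]
      omega
    · intro j hj
      simp only [Finset.mem_Ico, hn] at hj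
      simp only [Finset.mem_range]
      omega
    · intro i _
      show i + k - k = i
      omega
    · intro j hj
      simp only [Finset.mem_Ico, hn] at hj
      show j - k + k = j
      omega
    · intro i _
      show c i • y (i + k) = a (i + k) • y (i + k)
      have : a (i + k) = c i := by simp [ha, Nat.le_add_left k i]
      rw [this]
  -- v is in cSpan y, nonzero
  have hvC : v ∈ cSpan y := by
    rw [hvsum]
    exact Submodule.sum_mem _ (fun j _ => Submodule.smul_mem _ _ (mem_cSpan y j))
  have hvr : ‖(x' : X) - v‖ < r := hvdist
  have hr12 : r ≤ 1/2 := min_le_left _ _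
  have hrS : r ≤ δ/(8*(‖S‖+1)) := min_le_right _ _
  have hvlb : (1:ℝ)/2 ≤ ‖v‖ := by
    have h2 : ‖(x' : X)‖ - ‖v‖ ≤ ‖(x' : X) - v‖ := norm_sub_norm_le _ _
    have h3 : ‖(x' : X)‖ = 1 := hx'n
    linarith
  have hv0 : v ≠ 0 := by
    intro h; rw [h, norm_zero] at hvlb; linarith
  have hvn : (0:ℝ) < ‖v‖ := by linarith
  -- the normalized block vector w
  set vh : cSpan y := ⟨v, hvC⟩ with hvh
  set w : cSpan y := ((‖v‖ : ℂ))⁻¹ • vh with hw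
  have hnormv : ‖((‖v‖:ℂ))⁻¹‖ = ‖v‖⁻¹ := by
    rw [norm_inv, Complex.norm_real, Real.norm_eq_abs, abs_of_pos hvn]
  have hwn : ‖(w : X)‖ = 1 := by
    have : ‖w‖ = 1 := by
      rw [hw, norm_smul, hnormv]
      show ‖v‖⁻¹ * ‖vh‖ = 1
      have : ‖vh‖ = ‖v‖ := rfl
      rw [this, inv_mul_cancel₀ hvn.ne']
    exact this
  -- bound on ‖S w‖
  have hSv : ‖S vh‖ ≤ δ/4 + δ/8 := by
    have hdiff : ‖S vh - S x'‖ ≤ ‖S‖ * r := by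
      rw [← map_sub]
      calc ‖S (vh - x')‖ ≤ ‖S‖ * ‖vh - x'‖ := S.le_opNorm _
        _ ≤ ‖S‖ * r := by
            apply mul_le_mul_of_nonneg_left _ (norm_nonneg S)
            have : ‖vh - x'‖ = ‖v - (x' : X)‖ := rfl
            rw [this, norm_sub_rev]
            exact hvr.le
    have hSr : ‖S‖ * r ≤ δ/8 := by
      calc ‖S‖ * r ≤ (‖S‖+1) * (δ/(8*(‖S‖+1))) := by
            apply mul_le_mul (by linarith) hrS hrpos.le (by linarith)
        _ = δ/8 := by field_simp
    calc ‖S vh‖ ≤ ‖S vh - S x'‖ + ‖S x'‖ := by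
          have h := norm_sub_le (S vh - S x') (- S x')
          simpa [sub_neg_eq_add] using h
      _ ≤ ‖S‖ * r + δ/4 := by linarith [hx'S]
      _ ≤ δ/4 + δ/8 := by linarith
  have hSw : ‖S w‖ ≤ δ := by
    rw [hw, map_smul, norm_smul, hnormv]
    calc ‖v‖⁻¹ * ‖S vh‖ ≤ 2 * (δ/4 + δ/8) := by
          apply mul_le_mul _ hSv (norm_nonneg _) (by norm_num)
          rw [← one_div]
          rw [div_le_iff₀ hvn]
          linarith [hvlb]
      _ ≤ δ := by linarith
  refine ⟨n, fun j => ((‖v‖:ℂ))⁻¹ * a j, w, le_add_self, ?_, hwn, hSw⟩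
  show ((‖v‖:ℂ))⁻¹ • v = _
  rw [hvsum, Finset.smul_sum]
  exact Finset.sum_congr rfl (fun j _ => by rw [smul_smul])

theorem statement16 {X : Type*} [NormedAddCommGroup X] [NormedSpace ℂ X] [CompleteSpace X]
    (y : ℕ → X) (hy : IsNBasic2 y) (S : cSpan y →L[ℂ] X) (hS : StrictlySingular S) :
    ∀ ε > 0, ∃ y' : ℕ → X, IsNBlockOf y' y ∧
      ∀ u : cSpan y, (u : X) ∈ cSpan y' → ‖S u‖ ≤ ε * ‖u‖ := by
  classical
  intro ε hε
  have hδ : ∀ m : ℕ, (0:ℝ) < ε / 2^(m+3) := fun m => by positivity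
  choose n a w h1 h2 h3 h4 using fun p : ℕ × ℕ => key_block hy S hS p.1 (hδ p.2)
  -- the block boundaries
  set N : ℕ → ℕ := fun m => Nat.rec (motive := fun _ => ℕ) 0 (fun m Nm => n (Nm, m) + 1) m
    with hNdef
  have hN0 : N 0 = 0 := rfl
  have hNs : ∀ m, N (m+1) = n (N m, m) + 1 := fun m => rfl
  have hNlt : ∀ m, N m < N (m+1) := fun m => by
    rw [hNs]; exact Nat.lt_succ_of_le (h1 (N m, m))
  have hNmono : StrictMono N := strictMono_nat_of_lt_succ hNlt
  have hNge : ∀ m, m ≤ N m := fun m => by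
    induction m with
    | zero => omega
    | succ m ih => have := hNlt m; omega
  set A : ℕ → ℕ → ℂ := fun m => a (N m, m) with hA
  set W : ℕ → cSpan y := fun m => w (N m, m) with hWdef
  set y' : ℕ → X := fun m => (W m : X) with hy'
  set Fb : ℕ → Finset ℕ := fun m => Finset.Ico (N m) (N (m+1)) with hFb
  have hW : ∀ m, (W m : X) = ∑ j ∈ Fb m, A m j • y j := fun m => h2 (N m, m)
  have hWn : ∀ m, ‖(W m : X)‖ = 1 := fun m => h3 (N m, m)
  have hWS : ∀ m, ‖S (W m)‖ ≤ ε / 2^(m+3) := fun m => h4 (N m, m)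
  -- block uniqueness
  have hFsub : ∀ m j, j ∈ Fb m → m ≤ j ∧ j < N (m+1) ∧ N m ≤ j := by
    intro m j hj
    rw [hFb, Finset.mem_Ico] at hj
    exact ⟨le_trans (hNge m) hj.1, hj.2, hj.1⟩
  have huniq : ∀ m m' j, j ∈ Fb m → j ∈ Fb m' → m = m' := by
    intro m m' j hj hj'
    by_contra hne
    rw [hFb, Finset.mem_Ico] at hj hj'
    rcases Nat.lt_or_ge m m' with h | h
    · have : N (m+1) ≤ N m' := hNmono.monotone h
      omega
    · have hlt : m' < m := by omega
      have : N (m'+1) ≤ N m := hNmono.monotone hlt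
      omega
  -- globalize coefficients
  set aG : ℕ → ℂ := fun j => ∑ m ∈ Finset.range (j+1), if j ∈ Fb m then A m j else 0
    with haGdef
  have haG : ∀ m j, j ∈ Fb m → aG j = A m j := by
    intro m j hj
    show (∑ m' ∈ Finset.range (j+1), if j ∈ Fb m' then A m' j else 0) = A m j
    rw [Finset.sum_eq_single_of_mem m
      (Finset.mem_range.mpr (Nat.lt_succ_of_le (hFsub m j hj).1))
      (fun m' _ hne => if_neg (fun hj' => hne (huniq m' m j hj' hj)))]
    exact if_pos hj
  have hW' : ∀ m, (W m : X) = ∑ j ∈ Fb m, aG j • y j := fun m =>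
    (hW m).trans (Finset.sum_congr rfl (fun j hj => by rw [haG m j hj]))
  -- the coefficient globalization for arbitrary block coefficients b
  have hbG : ∀ (b : ℕ → ℂ) m j, j ∈ Fb m →
      ((∑ m' ∈ Finset.range (j+1), if j ∈ Fb m' then b m' else 0) * aG j) = b m * aG j := by
    intro b m j hj
    congr 1
    rw [Finset.sum_eq_single_of_mem m
      (Finset.mem_range.mpr (Nat.lt_succ_of_le (hFsub m j hj).1))
      (fun m' _ hne => if_neg (fun hj' => hne (huniq m' m j hj' hj)))]
    exact if_pos hj
  -- the representation of finite block combinations in terms of y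
  have hrep : ∀ (b : ℕ → ℂ) (K : ℕ),
      ∑ m ∈ Finset.range K, b m • y' m =
      ∑ j ∈ Finset.range (N K),
        ((∑ m' ∈ Finset.range (j+1), if j ∈ Fb m' then b m' else 0) * aG j) • y j := by
    intro b K
    induction K with
    | zero => simp [hN0]
    | succ K ih =>
        rw [Finset.sum_range_succ, ih]
        have hsplit : ∑ j ∈ Finset.range (N (K+1)),
            ((∑ m' ∈ Finset.range (j+1), if j ∈ Fb m' then b m' else 0) * aG j) • y j =
            ∑ j ∈ Finset.range (N K),
              ((∑ m' ∈ Finset.range (j+1), if j ∈ Fb m' then b m' else 0) * aG j) • y j +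
            ∑ j ∈ Fb K,
              ((∑ m' ∈ Finset.range (j+1), if j ∈ Fb m' then b m' else 0) * aG j) • y j := by
          rw [Finset.range_eq_Ico, Finset.range_eq_Ico]
          exact (Finset.sum_Ico_consecutive (fun j => ((∑ m' ∈ Finset.range (j+1), if j ∈ Fb m' then b m' else 0) * aG j) • y j) (Nat.zero_le _) (hNmono.monotone (Nat.le_succ K))).symm
        rw [hsplit]
        congr 1
        show b K • (W K : X) = _
        rw [hW' K, Finset.smul_sum]
        refine Finset.sum_congr rfl (fun j hj => ?_)
        rw [hbG b K j hj, smul_smul]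
  -- coefficient bound
  have hcoef : ∀ (b : ℕ → ℂ) (K : ℕ) (m : ℕ), m < K →
      ‖b m‖ ≤ 4 * ‖∑ m' ∈ Finset.range K, b m' • y' m'‖ := by
    intro b K m hm
    set cg : ℕ → ℂ := fun j =>
      (∑ m' ∈ Finset.range (j+1), if j ∈ Fb m' then b m' else 0) * aG j with hcg
    have hpart : ∀ t, t ≤ K → ‖∑ m' ∈ Finset.range t, b m' • y' m'‖ ≤
        2 * ‖∑ m' ∈ Finset.range K, b m' • y' m'‖ := by
      intro t ht
      rw [hrep b t, hrep b K]
      exact hy.2 cg (N t) (N K) (hNmono.monotone ht)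
    have hb : ‖b m • y' m‖ = ‖b m‖ := by
      rw [norm_smul, hy', hWn m, mul_one]
    have hdiff : b m • y' m = (∑ m' ∈ Finset.range (m+1), b m' • y' m') -
        ∑ m' ∈ Finset.range m, b m' • y' m' := by
      rw [Finset.sum_range_succ, add_sub_cancel_left]
    calc ‖b m‖ = ‖b m • y' m‖ := hb.symm
      _ ≤ ‖∑ m' ∈ Finset.range (m+1), b m' • y' m'‖ +
          ‖∑ m' ∈ Finset.range m, b m' • y' m'‖ := by rw [hdiff]; exact norm_sub_le _ _
      _ ≤ 2 * ‖∑ m' ∈ Finset.range K, b m' • y' m'‖ +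
          2 * ‖∑ m' ∈ Finset.range K, b m' • y' m'‖ := by
            have := hpart (m+1) hm
            have := hpart m (le_of_lt hm)
            linarith [hpart (m+1) hm, hpart m hm.le]
      _ = 4 * ‖∑ m' ∈ Finset.range K, b m' • y' m'‖ := by ring
  -- the estimate on finite combinations
  have hfin : ∀ (b : ℕ → ℂ) (K : ℕ),
      ‖S (∑ m ∈ Finset.range K, b m • W m)‖ ≤ ε * ‖∑ m ∈ Finset.range K, b m • W m‖ := by
    intro b K
    set uu : cSpan y := ∑ m ∈ Finset.range K, b m • W m with huu
    have huuX : (uu : X) = ∑ m ∈ Finset.range K, b m • y' m := by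
      rw [huu]
      push_cast
      rfl
    have hnuu : ‖uu‖ = ‖∑ m ∈ Finset.range K, b m • y' m‖ := by
      rw [← huuX]; rfl
    have hSuu : S uu = ∑ m ∈ Finset.range K, b m • S (W m) := by
      rw [huu, map_sum]
      exact Finset.sum_congr rfl (fun m _ => by rw [map_smul])
    rw [hSuu]
    calc ‖∑ m ∈ Finset.range K, b m • S (W m)‖
        ≤ ∑ m ∈ Finset.range K, ‖b m • S (W m)‖ := norm_sum_le _ _
      _ ≤ ∑ m ∈ Finset.range K, (4 * ‖uu‖) * (ε / 2^(m+3)) := by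
          apply Finset.sum_le_sum
          intro m hm
          rw [norm_smul]
          apply mul_le_mul _ (hWS m) (norm_nonneg _) (by positivity)
          rw [hnuu]
          exact hcoef b K m (Finset.mem_range.mp hm)
      _ = ∑ m ∈ Finset.range K, (4 * ‖uu‖) * (ε / 8) * (1/2:ℝ)^m :=
          Finset.sum_congr rfl (fun m _ => by
            rw [pow_add, div_pow, one_pow]
            rw [show ((2:ℝ))^3 = 8 by norm_num]
            ring)
      _ ≤ (4 * ‖uu‖) * (ε / 8) * 2 := by
          rw [← Finset.mul_sum]
          apply mul_le_mul_of_nonneg_left (sum_geometric_two_le K) (by positivity)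
      _ = ε * ‖uu‖ := by ring
  -- conclusion
  refine ⟨y', ⟨⟨aG, Fb, ?_, ?_, ?_, ?_⟩, fun m => hWn m⟩, ?_⟩
  · intro m
    rw [hFb, Finset.nonempty_Ico]
    exact hNlt m
  · intro m i j hi hj
    rw [hFb, Finset.mem_Ico] at hi hj
    omega
  · exact hW'
  · intro m h
    have hthis := hWn m
    have h' : (W m : X) = 0 := h
    rw [h', norm_zero] at hthis
    norm_num at hthis
  · -- extension to the closed span
    intro u hu
    -- first, on the algebraic span
    have hspan : ∀ v : cSpan y, (v : X) ∈ Submodule.span ℂ (Set.range y') →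
        ‖S v‖ ≤ ε * ‖v‖ := by
      intro v hv
      obtain ⟨c, hc⟩ := Finsupp.mem_span_range_iff_exists_finsupp.mp hv
      set K := c.support.sup id + 1 with hK
      have hvx : (v : X) = ∑ m ∈ Finset.range K, c m • y' m := by
        rw [← hc, Finsupp.sum]
        apply Finset.sum_subset
        · intro i hi
          exact Finset.mem_range.mpr (Nat.lt_succ_of_le (Finset.le_sup (f := id) hi))
        · intro i _ hi
          rw [Finsupp.notMem_support_iff.mp hi, zero_smul]
      have hveq : v = ∑ m ∈ Finset.range K, c m • W m := by
        apply Subtype.ext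
        rw [hvx]
        push_cast
        rfl
      rw [hveq]
      exact hfin c K
    -- pass to the closure using continuity
    set A' : Set (cSpan y) :=
      Subtype.val ⁻¹' ((Submodule.span ℂ (Set.range y') : Submodule ℂ X) : Set X) with hA'
    have huA : u ∈ closure A' := by
      have hind : IsInducing (Subtype.val : cSpan y → X) := IsInducing.subtypeVal
      rw [hind.closure_eq_preimage_closure_image A']
      have himg : Subtype.val '' A' = ((Submodule.span ℂ (Set.range y') : Submodule ℂ X) : Set X) := by
        rw [hA', Set.image_preimage_eq_inter_range]
        rw [Subtype.range_coe_subtype]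
        apply Set.inter_eq_self_of_subset_left
        intro z hz
        have hle : Submodule.span ℂ (Set.range y') ≤ cSpan y := by
          rw [Submodule.span_le]
          rintro _ ⟨m, rfl⟩
          exact (W m).2
        exact hle hz
      rw [himg]
      show (u : X) ∈ closure _
      rwa [cSpan, ← Submodule.topologicalClosure_coe] at *
    have hclosed : IsClosed {v : cSpan y | ‖S v‖ ≤ ε * ‖v‖} := by
      apply isClosed_le
      · exact (continuous_norm.comp S.continuous)
      · exact continuous_const.mul continuous_norm
    have hsub : A' ⊆ {v : cSpan y | ‖S v‖ ≤ ε * ‖v‖} := fun v hv => hspan v hv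
    exact (closure_minimal hsub hclosed) huA
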